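/- The quantum plane k⟨x_1,x_2⟩/(x_2x_1 - p x_1x_2) with p ≠ 1 and the Jordan plane k⟨x_1,x_2⟩/(x_2x_1 - x_1x_2 - x_1^2) are not isomorphic as graded k-algebras. -/

import Mathlib

noncomputable section

open FreeAlgebra

variable (k : Type) [Field k]

/-- Generators of the free algebra on two variables. -/
abbrev Y (i : Fin 2) : FreeAlgebra k (Fin 2) := FreeAlgebra.ι k i

/-- The defining relation of the quantum plane `k⟨x₁,x₂⟩/(x₂x₁ - p x₁x₂)`. -/
inductive relQuantum (p : k) : FreeAlgebra k (Fin 2) → FreeAlgebra k (Fin 2) → Prop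
  | r : relQuantum p (Y k 1 * Y k 0) (p • (Y k 0 * Y k 1))

/-- The defining relation of the Jordan plane `k⟨x₁,x₂⟩/(x₂x₁ - x₁x₂ - x₁²)`. -/
inductive relJordan : FreeAlgebra k (Fin 2) → FreeAlgebra k (Fin 2) → Prop
  | r : relJordan (Y k 1 * Y k 0) (Y k 0 * Y k 1 + Y k 0 * Y k 0)

/-- The quantum plane. -/
abbrev QuantumPlane (p : k) := RingQuot (relQuantum k p)

/-- The Jordan plane. -/
abbrev JordanPlane := RingQuot (relJordan k)

/-- Generators of the quantum plane. -/
abbrev qgen (p : k) (i : Fin 2) : QuantumPlane k p := RingQuot.mkAlgHom k (relQuantum k p) (Y k i)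

/-- Generators of the Jordan plane. -/
abbrev jgen (i : Fin 2) : JordanPlane k := RingQuot.mkAlgHom k (relJordan k) (Y k i)

/-! ### Auxiliary material: a faithful enough representation of the Jordan plane -/

open Polynomial in
/-- Multiplication by `t` on `k[t]`. -/
def Xop : Module.End k (Polynomial k) := LinearMap.mulLeft k Polynomial.X

open Polynomial in
/-- The operator `t² d/dt` on `k[t]`. -/
def Yop : Module.End k (Polynomial k) :=
  LinearMap.mulLeft k (Polynomial.X ^ 2) ∘ₗ (Polynomial.derivative : Polynomial k →ₗ[k] Polynomial k)

open Polynomial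

@[simp] lemma Xop_apply (f : Polynomial k) : Xop k f = Polynomial.X * f := rfl
@[simp] lemma Yop_apply (f : Polynomial k) : Yop k f = Polynomial.X ^ 2 * derivative f := rfl

lemma jordan_rel_op : Yop k * Xop k = Xop k * Yop k + Xop k * Xop k := by
  refine LinearMap.ext fun f => ?_
  simp only [Module.End.mul_apply, LinearMap.add_apply, Xop_apply, Yop_apply,
    derivative_mul, derivative_X, one_mul, mul_one]
  ring

lemma XY_ne_YX [CharZero k] : Xop k * Yop k ≠ Yop k * Xop k := by
  intro h
  have h2 := congrArg (fun F : Module.End k (Polynomial k) => coeff (F Polynomial.X) 3) h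
  simp only [Module.End.mul_apply, Xop_apply, Yop_apply, derivative_mul, derivative_X,
    one_mul, mul_one] at h2
  rw [show (X:Polynomial k)*X^2 = X^3 by ring,
    show (X:Polynomial k)^2*(X+X) = 2*X^3 by ring] at h2
  simp [coeff_X_pow] at h2

/-- The representation of the Jordan plane on `k[t]`. -/
def jordanRep : JordanPlane k →ₐ[k] Module.End k (Polynomial k) :=
  RingQuot.liftAlgHom k ⟨FreeAlgebra.lift k ![Xop k, Yop k], by
    rintro x y ⟨⟩
    simp only [map_mul, map_add, lift_ι_apply, Matrix.cons_val_one, Matrix.cons_val_zero,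
      Matrix.head_cons]
    exact jordan_rel_op k⟩

@[simp] lemma jordanRep_jgen0 : jordanRep k (jgen k 0) = Xop k := by
  rw [jordanRep, jgen, RingQuot.liftAlgHom_mkAlgHom_apply, Y, lift_ι_apply]
  rfl

@[simp] lemma jordanRep_jgen1 : jordanRep k (jgen k 1) = Yop k := by
  rw [jordanRep, jgen, RingQuot.liftAlgHom_mkAlgHom_apply, Y, lift_ι_apply]
  rfl

lemma comb_apply_one (a b : k) : (a • Xop k + b • Yop k) 1 = a • (X : Polynomial k) := by
  simp [smul_eq_C_mul]

lemma comb_apply_X (a b : k) : (a • Xop k + b • Yop k) X = (a + b) • (X : Polynomial k)^2 := by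
  simp [smul_eq_C_mul]; ring

lemma comb_apply_X2 (a b : k) :
    (a • Xop k + b • Yop k) (X^2) = (a + 2*b) • (X : Polynomial k)^3 := by
  simp [smul_eq_C_mul, derivative_X_pow, map_ofNat]; ring

lemma comb_apply_X3 (a b : k) :
    (a • Xop k + b • Yop k) (X^3) = (a + 3*b) • (X : Polynomial k)^4 := by
  simp [smul_eq_C_mul, derivative_X_pow, map_ofNat]; ring

lemma smul_pow_inj (n : ℕ) (r s : k) (h : r • (X : Polynomial k)^n = s • (X:Polynomial k)^n) :
    r = s := by
  have := congrArg (fun q => coeff q n) h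
  simpa [coeff_smul, coeff_X_pow] using this

lemma coeff_cases [CharZero k] (p a b c d : k) (hp1 : p ≠ 1)
    (h0 : a*(c+d) = p*(c*(a+b)))
    (h1 : (a+b)*(c+2*d) = p*((c+d)*(a+2*b)))
    (h2 : (a+2*b)*(c+3*d) = p*((c+2*d)*(a+3*b))) :
    (a = 0 ∧ b = 0) ∨ (c = 0 ∧ d = 0) := by
  have hp1' : (1:k) - p ≠ 0 := sub_ne_zero.mpr (Ne.symm hp1)
  have hbd : b * d = 0 := by
    have h : (2:k) * ((1-p) * (b*d)) = 0 := by linear_combination h2 - 2*h1 + h0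
    rcases mul_eq_zero.mp h with h | h
    · exact absurd h two_ne_zero
    · rcases mul_eq_zero.mp h with h | h
      · exact absurd h hp1'
      · exact h
  have hadbc : a*d + b*c = 0 := by
    have h : (1-p) * (a*d + b*c) = 0 := by linear_combination h1 - h0 - 2*(1-p)*hbd
    rcases mul_eq_zero.mp h with h | h
    · exact absurd h hp1'
    · exact h
  have hac0 : b = 0 → d = 0 → (a = 0 ∧ b = 0) ∨ (c = 0 ∧ d = 0) := by
    intro hb hd
    have h : (1-p) * (a*c) = 0 := by subst hb hd; linear_combination h0
    rcases mul_eq_zero.mp h with h | h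
    · exact absurd h hp1'
    · rcases mul_eq_zero.mp h with h | h
      · exact Or.inl ⟨h, hb⟩
      · exact Or.inr ⟨h, hd⟩
  rcases mul_eq_zero.mp hbd with hb | hd
  · have had : a * d = 0 := by subst hb; linear_combination hadbc
    rcases mul_eq_zero.mp had with ha | hd
    · exact Or.inl ⟨ha, hb⟩
    · exact hac0 hb hd
  · have hbc : b * c = 0 := by subst hd; linear_combination hadbc
    rcases mul_eq_zero.mp hbc with hb | hc
    · exact hac0 hb hd
    · exact Or.inr ⟨hc, hd⟩

/-- The Jordan plane is not generated by a single element. -/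
lemma no_single_generator [CharZero k] (w : JordanPlane k)
    (hx : jgen k 0 ∈ Algebra.adjoin k {w}) (hy : jgen k 1 ∈ Algebra.adjoin k {w}) : False := by
  have hx' : Xop k ∈ Algebra.adjoin k {jordanRep k w} := by
    have h1 : jordanRep k (jgen k 0) ∈ (Algebra.adjoin k {w}).map (jordanRep k) :=
      Subalgebra.mem_map.mpr ⟨_, hx, rfl⟩
    rw [AlgHom.map_adjoin_singleton] at h1
    simpa using h1
  have hy' : Yop k ∈ Algebra.adjoin k {jordanRep k w} := by
    have h1 : jordanRep k (jgen k 1) ∈ (Algebra.adjoin k {w}).map (jordanRep k) :=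
      Subalgebra.mem_map.mpr ⟨_, hy, rfl⟩
    rw [AlgHom.map_adjoin_singleton] at h1
    simpa using h1
  rw [Algebra.adjoin_singleton_eq_range_aeval] at hx' hy'
  obtain ⟨f, hf⟩ := hx'
  obtain ⟨g, hg⟩ := hy'
  apply XY_ne_YX k
  rw [← hf, ← hg, ← map_mul, mul_comm, map_mul]

/-- for `p ≠ 0, 1`, the quantum plane and the Jordan plane are not isomorphic
as graded algebras.  (A graded isomorphism must take the degree-one generators into the span
of the degree-one generators.) -/
theorem quantum_plane_not_iso_jordan_plane [IsAlgClosed k] [CharZero k]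
    (p : k) (hp0 : p ≠ 0) (hp1 : p ≠ 1) :
    ¬ ∃ e : QuantumPlane k p ≃ₐ[k] JordanPlane k,
      (∀ i : Fin 2, e (qgen k p i) ∈ Submodule.span k {jgen k 0, jgen k 1}) := by
  rintro ⟨e, hspan⟩
  obtain ⟨a, b, hu⟩ := Submodule.mem_span_pair.mp (hspan 0)
  obtain ⟨c, d, hv⟩ := Submodule.mem_span_pair.mp (hspan 1)
  -- the defining relation, transported through `e`
  have hq : qgen k p 1 * qgen k p 0 = p • (qgen k p 0 * qgen k p 1) := by
    have h := RingQuot.mkAlgHom_rel k (relQuantum.r (k := k) (p := p))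
    simpa only [map_mul, map_smul] using h
  have he : e (qgen k p 1) * e (qgen k p 0) = p • (e (qgen k p 0) * e (qgen k p 1)) := by
    rw [← map_mul, hq, map_smul, map_mul]
  -- push to operators on k[t]
  have hU : jordanRep k (e (qgen k p 0)) = a • Xop k + b • Yop k := by
    rw [← hu]; simp
  have hV : jordanRep k (e (qgen k p 1)) = c • Xop k + d • Yop k := by
    rw [← hv]; simp
  have hop : (c • Xop k + d • Yop k) * (a • Xop k + b • Yop k)
      = p • ((a • Xop k + b • Yop k) * (c • Xop k + d • Yop k)) := by
    have h := congrArg (jordanRep k) he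
    simp only [map_mul, map_smul, hU, hV] at h
    exact h
  -- extract the three scalar equations
  have E0 : a*(c+d) = p*(c*(a+b)) := by
    have h := congrArg (fun F : Module.End k (Polynomial k) => F 1) hop
    simp only [Module.End.mul_apply, LinearMap.smul_apply] at h
    rw [comb_apply_one, comb_apply_one, map_smul, map_smul, comb_apply_X, comb_apply_X,
      smul_smul, smul_smul, smul_smul] at h
    have h' := smul_pow_inj k 2 _ _ h
    linear_combination h'
  have E1 : (a+b)*(c+2*d) = p*((c+d)*(a+2*b)) := by
    have h := congrArg (fun F : Module.End k (Polynomial k) => F X) hop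
    simp only [Module.End.mul_apply, LinearMap.smul_apply] at h
    rw [comb_apply_X, comb_apply_X, map_smul, map_smul, comb_apply_X2, comb_apply_X2,
      smul_smul, smul_smul, smul_smul] at h
    have h' := smul_pow_inj k 3 _ _ h
    linear_combination h'
  have E2 : (a+2*b)*(c+3*d) = p*((c+2*d)*(a+3*b)) := by
    have h := congrArg (fun F : Module.End k (Polynomial k) => F (X^2)) hop
    simp only [Module.End.mul_apply, LinearMap.smul_apply] at h
    rw [comb_apply_X2, comb_apply_X2, map_smul, map_smul, comb_apply_X3, comb_apply_X3,
      smul_smul, smul_smul, smul_smul] at h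
    have h' := smul_pow_inj k 4 _ _ h
    linear_combination h'
  -- the whole Jordan plane is generated by the two images
  have hgen : ∀ z : JordanPlane k,
      z ∈ Algebra.adjoin k {e (qgen k p 0), e (qgen k p 1)} := by
    intro z
    set f : FreeAlgebra k (Fin 2) →ₐ[k] JordanPlane k :=
      (e : QuantumPlane k p →ₐ[k] JordanPlane k).comp (RingQuot.mkAlgHom k (relQuantum k p))
      with hf
    have hfs : Function.Surjective f :=
      e.surjective.comp (RingQuot.mkAlgHom_surjective k _)
    obtain ⟨w, rfl⟩ := hfs z
    have hw : w ∈ Algebra.adjoin k (Set.range (FreeAlgebra.ι k)) := by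
      rw [FreeAlgebra.adjoin_range_ι]; trivial
    have hmem : f w ∈ (Algebra.adjoin k (Set.range (FreeAlgebra.ι k))).map f :=
      Subalgebra.mem_map.mpr ⟨w, hw, rfl⟩
    rw [AlgHom.map_adjoin] at hmem
    refine Algebra.adjoin_mono ?_ hmem
    rintro _ ⟨_, ⟨i, rfl⟩, rfl⟩
    fin_cases i
    · exact Set.mem_insert _ _
    · exact Set.mem_insert_iff.mpr (Or.inr rfl)
  -- case analysis
  rcases coeff_cases k p a b c d hp1 E0 E1 E2 with ⟨ha, hb⟩ | ⟨hc, hd⟩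
  · -- e (qgen 0) = 0
    have hu0 : e (qgen k p 0) = 0 := by rw [← hu, ha, hb]; simp
    have hle : Algebra.adjoin k {e (qgen k p 0), e (qgen k p 1)}
        ≤ Algebra.adjoin k {e (qgen k p 1)} := by
      apply Algebra.adjoin_le
      rintro z (rfl | rfl)
      · rw [hu0]; exact Subalgebra.zero_mem _
      · exact Algebra.subset_adjoin rfl
    exact no_single_generator k _ (hle (hgen _)) (hle (hgen _))
  · -- e (qgen 1) = 0
    have hv0 : e (qgen k p 1) = 0 := by rw [← hv, hc, hd]; simp
    have hle : Algebra.adjoin k {e (qgen k p 0), e (qgen k p 1)}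
        ≤ Algebra.adjoin k {e (qgen k p 0)} := by
      apply Algebra.adjoin_le
      rintro z (rfl | rfl)
      · exact Algebra.subset_adjoin rfl
      · rw [hv0]; exact Subalgebra.zero_mem _
    exact no_single_generator k _ (hle (hgen _)) (hle (hgen _))
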